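/- arXiv:1511.02296 — 2 statements merged into one kernel-verified Lean document; each statement's English description precedes it below -/
import Mathlib

section
/- Let V be a measurable space, n, m ≥ 1, f : Vⁿ → [0,1] a measurable function, and D¹, …, Dⁿ probability measures on V. Let p = E_{x∼D¹×⋯×Dⁿ}[f(x)]. Draw, independently for each i ∈ [n], m i.i.d. samples x_{i1}, …, x_{im} from Dⁱ, and let E_{x∼𝐄}[f] denote the average of f over the product of the coordinate-wise empirical distributions, i.e. m^{−n} · ∑_{j₁,…,jₙ ∈ [m]} f(x_{1 j₁}, …, x_{n jₙ}). Then for every δ ∈ (0,1), the probability over the n·m samples that |E_{x∼𝐄}[f] − p| ≥ 2δ is at most 2·exp(−2mδ²/(4p+δ) − ln δ). -/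
open MeasureTheory

private lemma measure_eq_of_subsingleton' {α : Type*} [MeasurableSpace α] [Subsingleton α]
    (μ ν : Measure α) [IsProbabilityMeasure μ] [IsProbabilityMeasure ν] : μ = ν := by
  ext s _
  rcases Set.eq_empty_or_nonempty s with rfl | h
  · simp
  · rw [h.eq_univ, measure_univ, measure_univ]

private lemma transpose_mp {V : Type*} [MeasurableSpace V] (m : ℕ) :
    ∀ (n : ℕ) (D : Fin n → Measure V), (∀ i, IsProbabilityMeasure (D i)) →
      MeasurePreserving (fun (x : Fin n → Fin m → V) (t : Fin m) (i : Fin n) => x i t)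
        (Measure.pi fun i : Fin n => Measure.pi fun _ : Fin m => D i)
        (Measure.pi fun _ : Fin m => Measure.pi D) := by
  intro n
  induction n with
  | zero =>
    intro D hD
    haveI := hD
    have hmeas : Measurable (fun (x : Fin 0 → Fin m → V) (t : Fin m) (i : Fin 0) => x i t) :=
      measurable_pi_lambda _ fun t => measurable_pi_lambda _ fun i =>
        (measurable_pi_apply t).comp (measurable_pi_apply i)
    refine ⟨hmeas, ?_⟩
    haveI : IsProbabilityMeasure
        (Measure.pi fun i : Fin 0 => Measure.pi fun _ : Fin m => D i) := inferInstance
    haveI : IsProbabilityMeasure (Measure.pi fun _ : Fin m => Measure.pi D) := inferInstance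
    haveI : IsProbabilityMeasure ((Measure.pi fun i : Fin 0 =>
        Measure.pi fun _ : Fin m => D i).map
        (fun (x : Fin 0 → Fin m → V) (t : Fin m) (i : Fin 0) => x i t)) :=
      Measure.isProbabilityMeasure_map hmeas.aemeasurable
    exact measure_eq_of_subsingleton' _ _
  | succ n IH =>
    intro D hD
    haveI := hD
    have IH' := IH (fun i => D i.succ) (fun i => hD _)
    set ν' : Measure (Fin n → V) := Measure.pi fun i => D i.succ with hν'
    set κ : Fin (n+1) → Measure (Fin m → V) := fun i => Measure.pi fun _ : Fin m => D i with hκ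
    have hfam : (fun j : Fin n => D ((0 : Fin (n+1)).succAbove j)) = fun j => D j.succ := by
      funext j; rw [Fin.zero_succAbove]
    have hfamκ : (fun j : Fin n => κ ((0 : Fin (n+1)).succAbove j)) = fun j => κ j.succ := by
      funext j; rw [Fin.zero_succAbove]
    have h1 : MeasurePreserving
        (MeasurableEquiv.piFinSuccAbove (fun _ : Fin (n+1) => Fin m → V) 0)
        (Measure.pi κ) ((κ 0).prod (Measure.pi fun j : Fin n => κ j.succ)) := by
      have := measurePreserving_piFinSuccAbove κ 0
      rwa [hfamκ] at this
    have h2 : MeasurePreserving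
        (Prod.map (id : (Fin m → V) → Fin m → V)
          (fun (x : Fin n → Fin m → V) (t : Fin m) (i : Fin n) => x i t))
        ((κ 0).prod (Measure.pi fun j : Fin n => κ j.succ))
        ((κ 0).prod (Measure.pi fun _ : Fin m => ν')) :=
      (MeasurePreserving.id _).prod IH'
    have h3 : MeasurePreserving
        (MeasurableEquiv.arrowProdEquivProdArrow V (Fin n → V) (Fin m)).symm
        ((κ 0).prod (Measure.pi fun _ : Fin m => ν'))
        (Measure.pi fun _ : Fin m => (D 0).prod ν') :=
      (measurePreserving_arrowProdEquivProdArrow V (Fin n → V) (Fin m)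
        (fun _ => D 0) (fun _ => ν')).symm
    have h4 : MeasurePreserving
        (fun (y : Fin m → V × (Fin n → V)) (t : Fin m) =>
          (MeasurableEquiv.piFinSuccAbove (fun _ : Fin (n+1) => V) 0).symm (y t))
        (Measure.pi fun _ : Fin m => (D 0).prod ν')
        (Measure.pi fun _ : Fin m => Measure.pi D) := by
      apply measurePreserving_pi
      intro _
      have := (measurePreserving_piFinSuccAbove D 0).symm
      rwa [hfam, ← hν'] at this
    have hcomp := (h4.comp (h3.comp (h2.comp h1)))
    have hfun : (fun (x : Fin (n+1) → Fin m → V) (t : Fin m) (i : Fin (n+1)) => x i t) =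
        (fun (y : Fin m → V × (Fin n → V)) (t : Fin m) =>
          (MeasurableEquiv.piFinSuccAbove (fun _ : Fin (n+1) => V) 0).symm (y t)) ∘
        ((MeasurableEquiv.arrowProdEquivProdArrow V (Fin n → V) (Fin m)).symm ∘
        ((Prod.map (id : (Fin m → V) → Fin m → V)
          (fun (x : Fin n → Fin m → V) (t : Fin m) (i : Fin n) => x i t)) ∘
        (MeasurableEquiv.piFinSuccAbove (fun _ : Fin (n+1) => Fin m → V) 0))) := by
      funext x t i
      simp only [Function.comp_apply, MeasurableEquiv.piFinSuccAbove_symm_apply,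
        MeasurableEquiv.piFinSuccAbove_apply, MeasurableEquiv.arrowProdEquivProdArrow,
        MeasurableEquiv.coe_mk, Equiv.arrowProdEquivProdArrow, Equiv.coe_fn_symm_mk,
        Prod.map_apply, id_eq, Fin.insertNthEquiv, Equiv.coe_fn_mk, Fin.insertNthEquiv_symm_apply]
      induction i using Fin.cases with
      | zero => simp
      | succ j => simp [Fin.insertNth_apply_succAbove, Fin.tail]
    rw [hfun]
    exact hcomp

private lemma mgf_single {α : Type*} [MeasurableSpace α] (ν : Measure α) [IsProbabilityMeasure ν]
    (g : α → ℝ) (hg : Measurable g) (hg01 : ∀ y, g y ∈ Set.Icc (0:ℝ) 1) (s : ℝ) :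
    ∫ y, Real.exp (s * (g y - ∫ z, g z ∂ν)) ∂ν
      ≤ Real.exp ((∫ z, g z ∂ν) * (Real.exp s - 1 - s)) := by
  set p := ∫ z, g z ∂ν with hp
  have hgi : Integrable g ν := by
    refine (integrable_const (1 : ℝ)).mono' hg.aestronglyMeasurable ?_
    filter_upwards with y
    rw [Real.norm_eq_abs, abs_le]
    exact ⟨by linarith [(hg01 y).1], (hg01 y).2⟩
  have hpt : ∀ y, Real.exp (s * g y) ≤ 1 + (Real.exp s - 1) * g y := by
    intro y
    have h := convexOn_exp.2 (Set.mem_univ (0:ℝ)) (Set.mem_univ s)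
      (by linarith [(hg01 y).2] : (0:ℝ) ≤ 1 - g y) (hg01 y).1 (by ring)
    simp only [smul_eq_mul, mul_zero, zero_add, Real.exp_zero, mul_one] at h
    calc Real.exp (s * g y) = Real.exp ((1 - g y) * 0 + g y * s) := by ring_nf
    _ ≤ (1 - g y) * 1 + g y * Real.exp s := by
        simpa [Real.exp_zero] using h
    _ = 1 + (Real.exp s - 1) * g y := by ring
  have hexpint : Integrable (fun y => Real.exp (s * g y)) ν := by
    refine (integrable_const (Real.exp |s|)).mono'
      ((Real.measurable_exp.comp (hg.const_mul s)).aestronglyMeasurable) ?_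
    filter_upwards with y
    rw [Real.norm_eq_abs, abs_of_pos (Real.exp_pos _)]
    apply Real.exp_le_exp.2
    calc s * g y ≤ |s * g y| := le_abs_self _
    _ = |s| * |g y| := abs_mul _ _
    _ ≤ |s| * 1 := by
        refine mul_le_mul_of_nonneg_left ?_ (abs_nonneg _)
        rw [abs_le]; exact ⟨by linarith [(hg01 y).1], (hg01 y).2⟩
    _ = |s| := mul_one _
  have hint1 : ∫ y, Real.exp (s * g y) ∂ν ≤ 1 + (Real.exp s - 1) * p := by
    have : ∫ y, (1 + (Real.exp s - 1) * g y) ∂ν = 1 + (Real.exp s - 1) * p := by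
      rw [integral_add (integrable_const _) (hgi.const_mul _), integral_const,
        integral_const_mul]
      simp [hp]
    rw [← this]
    exact integral_mono hexpint ((integrable_const _).add (hgi.const_mul _)) hpt
  have hrw : ∀ y, Real.exp (s * (g y - p)) = Real.exp (s * g y) * Real.exp (-(s*p)) := by
    intro y; rw [← Real.exp_add]; ring_nf
  calc ∫ y, Real.exp (s * (g y - p)) ∂ν
      = (∫ y, Real.exp (s * g y) ∂ν) * Real.exp (-(s*p)) := by
        simp_rw [hrw]; rw [integral_mul_const]
    _ ≤ (1 + (Real.exp s - 1) * p) * Real.exp (-(s*p)) :=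
        mul_le_mul_of_nonneg_right hint1 (Real.exp_pos _).le
    _ ≤ Real.exp ((Real.exp s - 1) * p) * Real.exp (-(s*p)) := by
        refine mul_le_mul_of_nonneg_right ?_ (Real.exp_pos _).le
        calc 1 + (Real.exp s - 1) * p = (Real.exp s - 1) * p + 1 := by ring
        _ ≤ Real.exp ((Real.exp s - 1) * p) := Real.add_one_le_exp _
    _ = Real.exp (p * (Real.exp s - 1 - s)) := by
        rw [← Real.exp_add]; ring_nf
set_option maxHeartbeats 1000000 in
/-- **Concentration for the product of empirical distributions.**
Let `f : Vⁿ → [0,1]` be measurable, `D¹,…,Dⁿ` probability measures on `V`, and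
`p = E_{x ∼ D¹×⋯×Dⁿ}[f]`.  Draw `m` i.i.d. samples from each `Dⁱ`
(independently across coordinates); then the average of `f` over the product of
the coordinate-wise empirical distributions,
`m^{-n} ∑_{j₁,…,jₙ} f(x_{1 j₁},…,x_{n jₙ})`, deviates from `p` by at least `2δ`
with probability at most `2·exp(−2mδ²/(4p+δ) − ln δ)`. -/
theorem empirical_product_concentration {V : Type*} [MeasurableSpace V]
    (n m : ℕ) (hn : 1 ≤ n) (hm : 1 ≤ m)
    (f : (Fin n → V) → ℝ) (hf : Measurable f)
    (hf01 : ∀ x, f x ∈ Set.Icc (0 : ℝ) 1)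
    (D : Fin n → Measure V) (hD : ∀ i, IsProbabilityMeasure (D i))
    (p : ℝ) (hp : p = ∫ x, f x ∂(Measure.pi D))
    (δ : ℝ) (hδ : δ ∈ Set.Ioo (0 : ℝ) 1) :
    (Measure.pi fun i : Fin n => Measure.pi fun _ : Fin m => D i)
        {x : Fin n → Fin m → V |
          2 * δ ≤ |(1 / (m : ℝ) ^ n) * ∑ j : Fin n → Fin m, f (fun i => x i (j i)) - p|}
      ≤ ENNReal.ofReal
          (2 * Real.exp (-(2 * m * δ ^ 2) / (4 * p + δ) - Real.log δ)) := by
  haveI := hD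
  haveI : NeZero m := ⟨by omega⟩
  obtain ⟨hδ0, hδ1⟩ := hδ
  have hm0 : ((m : ℝ)) ≠ 0 := Nat.cast_ne_zero.2 (by omega)
  have hmpos : (0:ℝ) < (m:ℝ) := by positivity
  set ν : Measure (Fin n → V) := Measure.pi D with hν
  set μ : Measure (Fin n → Fin m → V) :=
    Measure.pi fun i : Fin n => Measure.pi fun _ : Fin m => D i with hμ
  haveI : IsProbabilityMeasure ν := by rw [hν]; infer_instance
  haveI : IsProbabilityMeasure μ := by rw [hμ]; infer_instance
  -- basic facts about f and p
  have hfint : Integrable f ν := by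
    refine (integrable_const (1 : ℝ)).mono' hf.aestronglyMeasurable ?_
    filter_upwards with y
    rw [Real.norm_eq_abs, abs_le]
    exact ⟨by linarith [(hf01 y).1], (hf01 y).2⟩
  have hp0 : 0 ≤ p := by
    rw [hp]; exact integral_nonneg fun y => (hf01 y).1
  have hp1 : p ≤ 1 := by
    rw [hp]
    calc ∫ x, f x ∂ν ≤ ∫ _, (1:ℝ) ∂ν :=
          integral_mono hfint (integrable_const _) fun y => (hf01 y).2
    _ = 1 := by simp
  set s : ℝ := δ / (p + δ) with hs
  have hpδ : 0 < p + δ := by linarith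
  have hs0 : 0 < s := div_pos hδ0 hpδ
  have hs1 : s ≤ 1 := (div_le_one hpδ).2 (by linarith)
  set N : ℝ := (m:ℝ)^n with hN
  have hNpos : (0:ℝ) < N := by positivity
  have hcardkN : ((Fintype.card (Fin n → Fin m) : ℝ)) = N := by
    rw [Fintype.card_fun, Fintype.card_fin, Fintype.card_fin, hN]
    push_cast; ring
  -- the empirical average
  set Y : (Fin n → Fin m → V) → ℝ :=
    fun x => 1 / N * ∑ j : Fin n → Fin m, f (fun i => x i (j i)) with hY
  have hmeasτ : ∀ j : Fin n → Fin m,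
      Measurable fun (x : Fin n → Fin m → V) => f (fun i => x i (j i)) := fun j =>
    hf.comp (measurable_pi_lambda _ fun i => (measurable_pi_apply (j i)).comp
      (measurable_pi_apply i))
  have hYmeas : Measurable Y := by
    apply Measurable.const_mul
    exact Finset.measurable_sum _ fun j _ => hmeasτ j
  have hY01 : ∀ x, Y x ∈ Set.Icc (0:ℝ) 1 := by
    intro x
    constructor
    · refine mul_nonneg (by positivity) (Finset.sum_nonneg fun j _ => (hf01 _).1)
    · rw [hY]
      have hsle : ∑ j : Fin n → Fin m, f (fun i => x i (j i)) ≤ N := by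
        calc ∑ j : Fin n → Fin m, f (fun i => x i (j i))
            ≤ (Finset.univ : Finset (Fin n → Fin m)).card • (1:ℝ) :=
              Finset.sum_le_card_nsmul _ _ _ fun j _ => (hf01 _).2
        _ = N := by rw [nsmul_eq_mul, Finset.card_univ, mul_one, hcardkN]
      calc 1 / N * ∑ j : Fin n → Fin m, f (fun i => x i (j i)) ≤ 1 / N * N := by
            exact mul_le_mul_of_nonneg_left hsle (by positivity)
      _ = 1 := by field_simp
  -- the diagonal averages
  set Dk : (Fin n → Fin m) → (Fin n → Fin m → V) → ℝ :=
    fun k x => 1 / (m:ℝ) * ∑ t : Fin m, f (fun i => x i (k i + t)) with hDk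
  have hDkmeas : ∀ k, Measurable (Dk k) := by
    intro k
    apply Measurable.const_mul
    exact Finset.measurable_sum _ fun t _ => hf.comp
      (measurable_pi_lambda _ fun i => (measurable_pi_apply (k i + t)).comp
        (measurable_pi_apply i))
  have hDk01 : ∀ k x, Dk k x ∈ Set.Icc (0:ℝ) 1 := by
    intro k x
    constructor
    · exact mul_nonneg (by positivity) (Finset.sum_nonneg fun t _ => (hf01 _).1)
    · rw [hDk]
      have hsle : ∑ t : Fin m, f (fun i => x i (k i + t)) ≤ (m:ℝ) := by
        calc ∑ t : Fin m, f (fun i => x i (k i + t))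
            ≤ (Finset.univ : Finset (Fin m)).card • (1:ℝ) :=
              Finset.sum_le_card_nsmul _ _ _ fun t _ => (hf01 _).2
        _ = (m:ℝ) := by rw [nsmul_eq_mul, Finset.card_univ, Fintype.card_fin, mul_one]
      calc 1 / (m:ℝ) * ∑ t : Fin m, f (fun i => x i (k i + t)) ≤ 1 / (m:ℝ) * m :=
            mul_le_mul_of_nonneg_left hsle (by positivity)
      _ = 1 := by field_simp
  have hdiag : ∀ x, ∑ k : Fin n → Fin m, Dk k x
      = ∑ j : Fin n → Fin m, f (fun i => x i (j i)) := by
    intro x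
    rw [hDk]
    have swap : ∑ k : Fin n → Fin m, ∑ t : Fin m, f (fun i => x i (k i + t))
        = ∑ t : Fin m, ∑ k : Fin n → Fin m, f (fun i => x i (k i + t)) :=
      Finset.sum_comm
    have inner : ∀ t : Fin m, (∑ k : Fin n → Fin m, f (fun i => x i (k i + t)))
        = ∑ j : Fin n → Fin m, f (fun i => x i (j i)) := by
      intro t
      have := Equiv.sum_comp (Equiv.piCongrRight fun _ : Fin n => Equiv.addRight t)
        (fun j : Fin n → Fin m => f (fun i => x i (j i)))
      rw [← this]
      apply Finset.sum_congr rfl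
      intro k _
      congr 1
    rw [← Finset.mul_sum, swap]
    simp_rw [inner]
    rw [Finset.sum_const, Finset.card_univ, Fintype.card_fin, nsmul_eq_mul]
    field_simp
  -- the measure-preserving diagonal maps and product factorization
  have hψ : ∀ k : Fin n → Fin m, MeasurePreserving
      (fun (x : Fin n → Fin m → V) (t : Fin m) (i : Fin n) => x i (k i + t))
      μ (Measure.pi fun _ : Fin m => ν) := by
    intro k
    have hshift : MeasurePreserving
        (fun (x : Fin n → Fin m → V) (i : Fin n) (j : Fin m) => x i (k i + j)) μ μ := by
      rw [hμ]
      refine measurePreserving_pi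
        (f := fun (i : Fin n) (y : Fin m → V) (j : Fin m) => y (k i + j)) _ _ fun i => ?_
      set e : Fin m ≃ Fin m := Equiv.addLeft (k i) with he
      have h := measurePreserving_piCongrLeft (fun _ : Fin m => D i) e.symm
      have hfun : (fun (y : Fin m → V) (j : Fin m) => y (k i + j)) =
          ⇑(MeasurableEquiv.piCongrLeft (fun _ : Fin m => V) e.symm) := by
        funext y j
        rw [MeasurableEquiv.coe_piCongrLeft]
        have := Equiv.piCongrLeft_apply_apply (fun _ : Fin m => V) e.symm y (e j)
        simp only [Equiv.symm_apply_apply] at this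
        rw [this, he]
        simp
      show MeasurePreserving (fun (y : Fin m → V) (j : Fin m) => y (k i + j)) _ _
      rw [hfun]
      exact h
    have htr := transpose_mp m n D hD
    rw [← hν, ← hμ] at htr
    exact htr.comp hshift
  have hfact : ∀ (k : Fin n → Fin m) (g : (Fin n → V) → ℝ), Measurable g →
      ∫ x, (∏ t : Fin m, g (fun i => x i (k i + t))) ∂μ = (∫ y, g y ∂ν) ^ m := by
    intro k g hg
    have hH : Measurable (fun (y : Fin m → Fin n → V) => ∏ t, g (y t)) :=
      Finset.measurable_prod _ fun t _ => hg.comp (measurable_pi_apply t)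
    have step1 : ∫ x, (∏ t : Fin m, g (fun i => x i (k i + t))) ∂μ
        = ∫ y, (∏ t, g (y t)) ∂(Measure.pi fun _ : Fin m => ν) := by
      rw [← (hψ k).map_eq, integral_map (hψ k).measurable.aemeasurable hH.aestronglyMeasurable]
    rw [step1]
    letI : MeasureSpace (Fin n → V) := ⟨ν⟩
    have := MeasureTheory.integral_fintype_prod_eq_pow (𝕜 := ℝ) (ι := Fin m) g (μ := ν)
    simpa using this
  -- integrability helper
  have hbdd_int : ∀ (h : (Fin n → Fin m → V) → ℝ), Measurable h →
      (∀ x, h x ∈ Set.Icc (0:ℝ) 1) → ∀ r : ℝ,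
      Integrable (fun x => Real.exp ((m*r)*(h x - p))) μ := by
    intro h hmeas hb r
    refine (integrable_const (Real.exp (|(m:ℝ) * r| * 2))).mono'
      (Real.measurable_exp.comp ((hmeas.sub measurable_const).const_mul _)).aestronglyMeasurable ?_
    filter_upwards with x
    rw [Real.norm_eq_abs, abs_of_pos (Real.exp_pos _)]
    apply Real.exp_le_exp.2
    calc ((m:ℝ)*r)*(h x - p) ≤ |((m:ℝ)*r)*(h x - p)| := le_abs_self _
    _ = |(m:ℝ) * r| * |h x - p| := abs_mul _ _
    _ ≤ |(m:ℝ) * r| * 2 := by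
        refine mul_le_mul_of_nonneg_left ?_ (abs_nonneg _)
        rw [abs_le]
        constructor <;> nlinarith [(hb x).1, (hb x).2]
  -- the main exponential-moment bound
  have main : ∀ r : ℝ, |r| ≤ 1 →
      ∫ x, Real.exp (((m:ℝ)*r)*(Y x - p)) ∂μ ≤ Real.exp (m*((3/4)*p*r^2)) := by
    intro r hr
    set g : (Fin n → V) → ℝ := fun y => Real.exp (r * (f y - p)) with hg
    have hgmeas : Measurable g := Real.measurable_exp.comp ((hf.sub measurable_const).const_mul r)
    have hg1 : ∫ y, g y ∂ν ≤ Real.exp (p * (Real.exp r - 1 - r)) := by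
      have h := mgf_single ν f hf hf01 r
      rw [← hp] at h
      exact h
    have hgnn : (0:ℝ) ≤ ∫ y, g y ∂ν := integral_nonneg fun y => (Real.exp_pos _).le
    have hk : ∀ k, ∫ x, Real.exp (((m:ℝ)*r) * (Dk k x - p)) ∂μ
        ≤ Real.exp (m * (p * (Real.exp r - 1 - r))) := by
      intro k
      have hid : ∀ x, Real.exp (((m:ℝ)*r) * (Dk k x - p))
          = ∏ t : Fin m, g (fun i => x i (k i + t)) := by
        intro x
        have harith : ((m:ℝ)*r) * (Dk k x - p)
            = ∑ t : Fin m, r * (f (fun i => x i (k i + t)) - p) := by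
          rw [hDk]
          simp only [mul_sub, Finset.sum_sub_distrib, ← Finset.mul_sum,
            Finset.sum_const, Finset.card_univ, Fintype.card_fin, nsmul_eq_mul]
          field_simp
        rw [harith, Real.exp_sum]
      calc ∫ x, Real.exp (((m:ℝ)*r) * (Dk k x - p)) ∂μ
          = ∫ x, ∏ t : Fin m, g (fun i => x i (k i + t)) ∂μ := by simp_rw [hid]
      _ = (∫ y, g y ∂ν) ^ m := hfact k g hgmeas
      _ ≤ (Real.exp (p * (Real.exp r - 1 - r))) ^ m := pow_le_pow_left₀ hgnn hg1 m
      _ = Real.exp (m * (p * (Real.exp r - 1 - r))) := by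
          rw [← Real.exp_nat_mul]
    have hw : ∑ _k : Fin n → Fin m, 1 / N = (1:ℝ) := by
      rw [Finset.sum_const, Finset.card_univ, nsmul_eq_mul, hcardkN]
      field_simp
    have hjen : ∀ x, Real.exp (((m:ℝ)*r)*(Y x - p))
        ≤ ∑ k : Fin n → Fin m, 1 / N * Real.exp (((m:ℝ)*r)*(Dk k x - p)) := by
      intro x
      have hpt : ((m:ℝ)*r)*(Y x - p)
          = ∑ k : Fin n → Fin m, (1 / N) • (((m:ℝ)*r)*(Dk k x - p)) := by
        simp only [smul_eq_mul]
        have e1 : ∑ k : Fin n → Fin m, 1 / N * (((m:ℝ)*r)*(Dk k x - p))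
            = ((m:ℝ)*r) * (1/N) * (∑ k : Fin n → Fin m, (Dk k x - p)) := by
          rw [Finset.mul_sum]
          exact Finset.sum_congr rfl fun k _ => by ring
        rw [e1, Finset.sum_sub_distrib, Finset.sum_const, Finset.card_univ, nsmul_eq_mul,
          hcardkN, hdiag x, hY]
        field_simp
        try ring
      rw [hpt]
      exact convexOn_exp.map_sum_le (fun k _ => by positivity) hw (fun k _ => Set.mem_univ _)
    have hint_k : ∀ k : Fin n → Fin m,
        Integrable (fun x => Real.exp (((m:ℝ)*r)*(Dk k x - p))) μ := fun k =>
      hbdd_int (Dk k) (hDkmeas k) (hDk01 k) r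
    have hint_Y : Integrable (fun x => Real.exp (((m:ℝ)*r)*(Y x - p))) μ :=
      hbdd_int Y hYmeas hY01 r
    calc ∫ x, Real.exp (((m:ℝ)*r)*(Y x - p)) ∂μ
        ≤ ∫ x, ∑ k : Fin n → Fin m, 1 / N * Real.exp (((m:ℝ)*r)*(Dk k x - p)) ∂μ :=
          integral_mono hint_Y
            (integrable_finset_sum _ fun k _ => (hint_k k).const_mul _) hjen
    _ = ∑ k : Fin n → Fin m, 1 / N * ∫ x, Real.exp (((m:ℝ)*r)*(Dk k x - p)) ∂μ := by
        rw [integral_finset_sum _ fun k _ => (hint_k k).const_mul _]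
        exact Finset.sum_congr rfl fun k _ => integral_const_mul _ _
    _ ≤ ∑ k : Fin n → Fin m, 1 / N * Real.exp (m * (p * (Real.exp r - 1 - r))) :=
        Finset.sum_le_sum fun k _ => mul_le_mul_of_nonneg_left (hk k) (by positivity)
    _ = Real.exp (m * (p * (Real.exp r - 1 - r))) := by
        rw [← Finset.sum_mul, hw, one_mul]
    _ ≤ Real.exp (m*((3/4)*p*r^2)) := by
        apply Real.exp_le_exp.2
        have hb : Real.exp r - 1 - r ≤ (3/4)*r^2 := by
          have h2 := Real.exp_bound hr (by norm_num : 0 < 2)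
          simp only [Finset.sum_range_succ, Finset.sum_range_zero, pow_zero, pow_one,
            Nat.factorial] at h2
          norm_num at h2
          nlinarith [abs_le.1 h2, sq_abs r]
        have : p * (Real.exp r - 1 - r) ≤ (3/4)*p*r^2 := by nlinarith [hp0]
        have hm' : (0:ℝ) ≤ (m:ℝ) := hmpos.le
        nlinarith [this, hm']
  -- Markov's inequality
  set c : ℝ := Real.exp (((m:ℝ)*s)*(2*δ)) with hc
  have hcpos : (0:ℝ) < c := Real.exp_pos _
  set G : (Fin n → Fin m → V) → ℝ :=
    fun x => Real.exp (((m:ℝ)*s)*(Y x - p)) + Real.exp (((m:ℝ)*(-s))*(Y x - p)) with hG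
  have hGmeas : Measurable G :=
    (Real.measurable_exp.comp ((hYmeas.sub measurable_const).const_mul _)).add
    (Real.measurable_exp.comp ((hYmeas.sub measurable_const).const_mul _))
  have hGint : Integrable G μ :=
    (hbdd_int Y hYmeas hY01 s).add (hbdd_int Y hYmeas hY01 (-s))
  have hsub : {x : Fin n → Fin m → V |
      2 * δ ≤ |1 / N * ∑ j : Fin n → Fin m, f (fun i => x i (j i)) - p|}
      ⊆ {x | c ≤ G x} := by
    intro x hx
    simp only [Set.mem_setOf_eq] at hx ⊢
    have h1 : ((m:ℝ)*s)*(2*δ) ≤ ((m:ℝ)*s)*|Y x - p| :=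
      mul_le_mul_of_nonneg_left hx (by positivity)
    have h2 : Real.exp (((m:ℝ)*s)*|Y x - p|) ≤ G x := by
      rcases le_or_gt p (Y x) with hle | hlt
      · rw [abs_of_nonneg (by linarith)]
        rw [hG]
        have := (Real.exp_pos (((m:ℝ)*(-s))*(Y x - p))).le
        simp only []
        linarith
      · rw [abs_of_neg (by linarith)]
        rw [hG]
        have := (Real.exp_pos (((m:ℝ)*s)*(Y x - p))).le
        have heq : ((m:ℝ)*s)*(-(Y x - p)) = ((m:ℝ)*(-s))*(Y x - p) := by ring
        rw [heq]
        simp only []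
        linarith
    calc c ≤ Real.exp (((m:ℝ)*s)*|Y x - p|) := Real.exp_le_exp.2 h1
    _ ≤ G x := h2
  have hmar := mul_meas_ge_le_integral_of_nonneg (μ := μ) (f := G)
    (Filter.Eventually.of_forall fun x => by positivity) hGint c
  have hintG : ∫ x, G x ∂μ ≤ 2 * Real.exp ((m:ℝ)*((3/4)*p*s^2)) := by
    rw [hG, integral_add (hbdd_int Y hYmeas hY01 s) (hbdd_int Y hYmeas hY01 (-s))]
    have e1 := main s (by rw [abs_of_pos hs0]; exact hs1)
    have e2 := main (-s) (by rw [abs_neg, abs_of_pos hs0]; exact hs1)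
    have hsq : (-s)^2 = s^2 := by ring
    rw [hsq] at e2
    linarith
  have htoReal : (μ {x | c ≤ G x}).toReal ≤ (∫ x, G x ∂μ) / c :=
    (le_div_iff₀ hcpos).2 (by rw [mul_comm]; exact hmar)
  -- final numeric bound
  have hfinal : (∫ x, G x ∂μ) / c ≤ 2 * Real.exp (-(2*m*δ^2)/(4*p+δ) - Real.log δ) := by
    have step : (∫ x, G x ∂μ) / c ≤ (2 * Real.exp ((m:ℝ)*((3/4)*p*s^2))) / c := by
      gcongr
    refine step.trans ?_
    rw [hc, mul_div_assoc, ← Real.exp_sub]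
    have hexp : (m:ℝ)*((3/4)*p*s^2) - ((m:ℝ)*s)*(2*δ)
        ≤ -(2*m*δ^2)/(4*p+δ) - Real.log δ := by
      have hlog : Real.log δ ≤ 0 := Real.log_nonpos hδ0.le hδ1.le
      have h4 : (0:ℝ) < 4*p+δ := by linarith
      have core : (3/4)*p*s^2 - s*(2*δ) ≤ -(2*δ^2)/(4*p+δ) := by
        rw [hs, ← sub_nonneg]
        have e : -(2*δ^2)/(4*p+δ) - ((3:ℝ)/4*p*(δ/(p+δ))^2 - δ/(p+δ)*(2*δ))
            = (δ^2*(3*p^2 + (21/4)*p*δ))/((p+δ)^2*(4*p+δ)) := by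
          field_simp
          ring
        rw [e]
        apply div_nonneg
        · apply mul_nonneg (sq_nonneg δ)
          nlinarith [sq_nonneg p, mul_nonneg hp0 hδ0.le]
        · positivity
      have : (m:ℝ)*((3/4)*p*s^2) - ((m:ℝ)*s)*(2*δ) = (m:ℝ)*((3/4)*p*s^2 - s*(2*δ)) := by ring
      rw [this]
      have hrhs : -(2*(m:ℝ)*δ^2)/(4*p+δ) = (m:ℝ) * (-(2*δ^2)/(4*p+δ)) := by ring
      calc (m:ℝ)*((3/4)*p*s^2 - s*(2*δ)) ≤ (m:ℝ) * (-(2*δ^2)/(4*p+δ)) :=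
            mul_le_mul_of_nonneg_left core hmpos.le
      _ = -(2*(m:ℝ)*δ^2)/(4*p+δ) := hrhs.symm
      _ ≤ -(2*(m:ℝ)*δ^2)/(4*p+δ) - Real.log δ := by linarith
    have := Real.exp_le_exp.2 hexp
    linarith
  refine le_trans (measure_mono hsub) ?_
  calc μ {x | c ≤ G x}
      = ENNReal.ofReal ((μ {x | c ≤ G x}).toReal) :=
        (ENNReal.ofReal_toReal (measure_ne_top _ _)).symm
    _ ≤ ENNReal.ofReal ((∫ x, G x ∂μ) / c) := ENNReal.ofReal_le_ofReal htoReal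
    _ ≤ ENNReal.ofReal (2 * Real.exp (-(2*m*δ^2)/(4*p+δ) - Real.log δ)) :=
        ENNReal.ofReal_le_ofReal hfinal
end

section
/- Let D be a regular Borel probability distribution on [0,∞) and let ε ∈ (0,1). Let D^trunc_ε be the ε-truncation of D, i.e. the pushforward of D under v ↦ min(v, v(ε)) where v(ε) = inf{t ≥ 0 : F(t) ≥ 1−ε} and F is the CDF of D (this replaces the top ε probability mass of D with a point mass). Then Opt(D^trunc_ε) ≥ (1 − ε)·Opt(D), where for a single buyer Opt(D) = sup_{p ≥ 0} p·P_{v∼D}(v ≥ p). -/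
open MeasureTheory

/-- The value at quantile `q`: `v(q) = inf {t ≥ 0 : F(t) ≥ 1-q}` where `F` is
the CDF of `D`. -/
noncomputable def qval (D : Measure ℝ) (q : ℝ) : ℝ :=
  sInf {t : ℝ | 0 ≤ t ∧ ENNReal.ofReal (1 - q) ≤ D (Set.Iic t)}

/-- A distribution on `[0,∞)` is regular if its revenue curve in quantile
space, `R(q) = q·v(q)`, is concave on `[0,1]`. -/
def Regular (D : Measure ℝ) : Prop :=
  ConcaveOn ℝ (Set.Icc (0 : ℝ) 1) (fun q => q * qval D q)

/-- Single-buyer optimal revenue: `sup_{p ≥ 0} p·P_{v∼D}(v ≥ p)`. -/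
noncomputable def Opt1 (D : Measure ℝ) : ℝ :=
  sSup {r : ℝ | ∃ p : ℝ, 0 ≤ p ∧ r = p * (D (Set.Ici p)).toReal}

lemma qval_nonneg (D : Measure ℝ) (q : ℝ) : 0 ≤ qval D q :=
  Real.sInf_nonneg fun _ hx => hx.1

lemma qval_set_nonempty (D : Measure ℝ) [IsProbabilityMeasure D] {q : ℝ} (hq : 0 < q) :
    {t : ℝ | 0 ≤ t ∧ ENNReal.ofReal (1 - q) ≤ D (Set.Iic t)}.Nonempty := by
  have hU : (⋃ n : ℕ, Set.Iic (n : ℝ)) = Set.univ := by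
    ext x
    simp only [Set.mem_iUnion, Set.mem_Iic, Set.mem_univ, iff_true]
    exact exists_nat_ge x
  have hmono : Monotone (fun n : ℕ => Set.Iic (n : ℝ)) := fun a b hab =>
    Set.Iic_subset_Iic.2 (by exact_mod_cast hab)
  have hsup : (⨆ n : ℕ, D (Set.Iic (n : ℝ))) = 1 := by
    rw [← hmono.measure_iUnion, hU, measure_univ]
  have hlt : ENNReal.ofReal (1 - q) < ⨆ n : ℕ, D (Set.Iic (n : ℝ)) := by
    rw [hsup]
    exact ENNReal.ofReal_lt_one.2 (by linarith)
  obtain ⟨n, hn⟩ := lt_iSup_iff.1 hlt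
  exact ⟨(n : ℝ), n.cast_nonneg, hn.le⟩

/-- Right-continuity at the quantile: `F(v(q)) ≥ 1 - q`. -/
lemma measure_Iic_qval (D : Measure ℝ) [IsProbabilityMeasure D] {q : ℝ} (hq : 0 < q) :
    ENNReal.ofReal (1 - q) ≤ D (Set.Iic (qval D q)) := by
  set v := qval D q with hv
  set S := {t : ℝ | 0 ≤ t ∧ ENNReal.ofReal (1 - q) ≤ D (Set.Iic t)} with hS
  have hSne := qval_set_nonempty D hq
  have hSbdd : BddBelow S := ⟨0, fun t ht => ht.1⟩
  have key : ∀ n : ℕ, ENNReal.ofReal (1 - q) ≤ D (Set.Iic (v + 1 / (n + 1))) := by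
    intro n
    have hlt : sInf S < v + 1 / (n + 1) := by
      have h0 : (0 : ℝ) < 1 / (n + 1) := by positivity
      have hvS : sInf S = v := rfl
      rw [hvS]; linarith
    obtain ⟨t, htS, htlt⟩ := (csInf_lt_iff hSbdd hSne).1 hlt
    exact le_trans htS.2 (measure_mono (Set.Iic_subset_Iic.2 htlt.le))
  have hInter : Set.Iic v = ⋂ n : ℕ, Set.Iic (v + 1 / (n + 1)) := by
    ext x
    simp only [Set.mem_Iic, Set.mem_iInter]
    constructor
    · intro h n
      have : (0 : ℝ) < 1 / (n + 1) := by positivity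
      linarith
    · intro h
      by_contra hx
      push_neg at hx
      obtain ⟨n, hn⟩ := exists_nat_one_div_lt (by linarith : (0 : ℝ) < x - v)
      have := h n
      linarith
  have hanti : Antitone (fun n : ℕ => Set.Iic (v + 1 / (n + 1))) := by
    intro a b hab
    apply Set.Iic_subset_Iic.2
    have : (1 : ℝ) / (b + 1) ≤ 1 / (a + 1) := by
      apply one_div_le_one_div_of_le (by positivity)
      exact_mod_cast Nat.succ_le_succ hab
    linarith
  rw [hInter, hanti.measure_iInter (fun n => (measurableSet_Iic).nullMeasurableSet)
    ⟨0, measure_ne_top D _⟩]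
  exact le_iInf key

lemma measure_Iio_qval (D : Measure ℝ) [IsProbabilityMeasure D]
    (hnonneg : D (Set.Iio 0) = 0) (q : ℝ) :
    D (Set.Iio (qval D q)) ≤ ENNReal.ofReal (1 - q) := by
  set v := qval D q with hv
  set S := {t : ℝ | 0 ≤ t ∧ ENNReal.ofReal (1 - q) ≤ D (Set.Iic t)} with hS
  have hSbdd : BddBelow S := ⟨0, fun t ht => ht.1⟩
  have key : ∀ t : ℝ, t < v → D (Set.Iic t) ≤ ENNReal.ofReal (1 - q) := by
    intro t ht
    rcases lt_or_ge t 0 with h0 | h0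
    · calc D (Set.Iic t) ≤ D (Set.Iio 0) := measure_mono (fun x hx => lt_of_le_of_lt hx h0)
        _ = 0 := hnonneg
        _ ≤ _ := zero_le
    · by_contra hcon
      push_neg at hcon
      have htS : t ∈ S := ⟨h0, hcon.le⟩
      have : v ≤ t := csInf_le hSbdd htS
      linarith
  rcases le_or_gt v 0 with hv0 | hv0
  · calc D (Set.Iio v) ≤ D (Set.Iio 0) := measure_mono (Set.Iio_subset_Iio hv0)
      _ = 0 := hnonneg
      _ ≤ _ := zero_le
  · have hUnion : Set.Iio v = ⋃ n : ℕ, Set.Iic (v - 1 / (n + 1)) := by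
      ext x
      simp only [Set.mem_Iio, Set.mem_iUnion, Set.mem_Iic]
      constructor
      · intro h
        obtain ⟨n, hn⟩ := exists_nat_one_div_lt (by linarith : (0 : ℝ) < v - x)
        exact ⟨n, by linarith⟩
      · rintro ⟨n, hn⟩
        have : (0 : ℝ) < 1 / (n + 1) := by positivity
        linarith
    have hmono : Monotone (fun n : ℕ => Set.Iic (v - 1 / (n + 1))) := by
      intro a b hab
      apply Set.Iic_subset_Iic.2
      have : (1 : ℝ) / (b + 1) ≤ 1 / (a + 1) := by
        apply one_div_le_one_div_of_le (by positivity)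
        exact_mod_cast Nat.succ_le_succ hab
      linarith
    rw [hUnion, hmono.measure_iUnion]
    refine iSup_le fun n => key _ ?_
    have : (0 : ℝ) < 1 / (n + 1) := by positivity
    linarith

/-- If the measure of `Ici p` strictly exceeds `q`, the price `p` is at most
the value at quantile `q`. -/
lemma price_le_qval (D : Measure ℝ) [IsProbabilityMeasure D] {p q : ℝ}
    (hq : 0 < q) (hq1 : q < 1) (h : ENNReal.ofReal q < D (Set.Ici p)) : p ≤ qval D q := by
  have hSne := qval_set_nonempty D hq
  refine le_csInf hSne fun t ht => ?_
  by_contra hcon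
  push_neg at hcon
  have hdisj : Disjoint (Set.Iic t) (Set.Ici p) := Set.Iic_disjoint_Ici.2 (not_le.2 hcon)
  have hsum : D (Set.Iic t) + D (Set.Ici p) ≤ 1 := by
    rw [← measure_union hdisj measurableSet_Ici]
    exact (measure_mono (Set.subset_univ _)).trans_eq measure_univ
  have h1 : (1 : ENNReal) < D (Set.Iic t) + D (Set.Ici p) := by
    have heq : ENNReal.ofReal (1 - q) + ENNReal.ofReal q = 1 := by
      rw [← ENNReal.ofReal_add (by linarith) hq.le]; norm_num
    calc (1 : ENNReal) = ENNReal.ofReal (1 - q) + ENNReal.ofReal q := heq.symm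
      _ < D (Set.Iic t) + D (Set.Ici p) :=
          ENNReal.add_lt_add_of_le_of_lt ENNReal.ofReal_ne_top ht.2 h
  exact absurd hsum (not_le.2 h1)

/-- The key consequence of regularity: for `0 ≤ q ≤ ε < 1`,
`(1-ε)·R(q) ≤ R(ε)`. -/
lemma regular_bound (D : Measure ℝ) (hreg : Regular D) {ε q : ℝ}
    (hε : ε ∈ Set.Ioo (0 : ℝ) 1) (hq0 : 0 ≤ q) (hqε : q ≤ ε) :
    (1 - ε) * (q * qval D q) ≤ ε * qval D ε := by
  obtain ⟨hε0, hε1⟩ := hε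
  have hq1 : (0 : ℝ) < 1 - q := by linarith
  set a : ℝ := (1 - ε) / (1 - q) with ha
  set b : ℝ := (ε - q) / (1 - q) with hb
  have ha0 : 0 ≤ a := div_nonneg (by linarith) hq1.le
  have hb0 : 0 ≤ b := div_nonneg (by linarith) hq1.le
  have hab : a + b = 1 := by
    rw [ha, hb]; field_simp; ring
  have hcomb : a • q + b • (1 : ℝ) = ε := by
    simp only [smul_eq_mul, mul_one]
    rw [ha, hb]; field_simp; ring
  have hqmem : q ∈ Set.Icc (0 : ℝ) 1 := ⟨hq0, by linarith⟩
  have h1mem : (1 : ℝ) ∈ Set.Icc (0 : ℝ) 1 := ⟨zero_le_one, le_refl 1⟩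
  have hcc := hreg.2 hqmem h1mem ha0 hb0 hab
  rw [hcomb] at hcc
  have hR1 : 0 ≤ (1 : ℝ) * qval D 1 := by
    simpa using qval_nonneg D 1
  have hRq : 0 ≤ q * qval D q := mul_nonneg hq0 (qval_nonneg D q)
  have hage : 1 - ε ≤ a := by
    rw [ha, le_div_iff₀ hq1]
    nlinarith
  calc (1 - ε) * (q * qval D q) ≤ a * (q * qval D q) :=
        mul_le_mul_of_nonneg_right hage hRq
    _ ≤ a * (q * qval D q) + b * ((1 : ℝ) * qval D 1) := by
        nlinarith [mul_nonneg hb0 hR1]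
    _ ≤ ε * qval D ε := by simpa [smul_eq_mul] using hcc

/-- **Truncation of a regular distribution.** Replacing the top `ε` probability
mass of a regular distribution `D` on `[0,∞)` by a point mass at the quantile-ε
value (i.e. pushing `D` forward under `v ↦ min(v, v(ε))`) keeps at least a
`1-ε` fraction of the single-buyer optimal revenue. -/
theorem truncation_single_buyer (D : Measure ℝ) [IsProbabilityMeasure D]
    (hnonneg : D (Set.Iio 0) = 0) (hreg : Regular D)
    (ε : ℝ) (hε : ε ∈ Set.Ioo (0 : ℝ) 1) :
    (1 - ε) * Opt1 D ≤ Opt1 (Measure.map (fun v : ℝ => min v (qval D ε)) D) := by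
  obtain ⟨hε0, hε1⟩ := hε
  set vε : ℝ := qval D ε with hvε
  have hvε0 : 0 ≤ vε := qval_nonneg D ε
  set f : ℝ → ℝ := fun v => min v vε with hf
  have hfm : Measurable f := measurable_id.min measurable_const
  set Dt : Measure ℝ := Measure.map f D with hDt
  have hmap : ∀ p : ℝ, Dt (Set.Ici p) = D (f ⁻¹' Set.Ici p) := fun p =>
    Measure.map_apply hfm measurableSet_Ici
  have hpre_le : ∀ p : ℝ, p ≤ vε → f ⁻¹' Set.Ici p = Set.Ici p := by
    intro p hp
    ext x
    simp only [Set.mem_preimage, Set.mem_Ici, hf, le_min_iff]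
    exact ⟨fun h => h.1, fun h => ⟨h, hp⟩⟩
  have hpre_gt : ∀ p : ℝ, vε < p → f ⁻¹' Set.Ici p = ∅ := by
    intro p hp
    ext x
    simp only [Set.mem_preimage, Set.mem_Ici, hf, le_min_iff, Set.mem_empty_iff_false,
      iff_false, not_and]
    intro _
    linarith
  -- the revenue set of the truncated measure
  set T : Set ℝ := {r : ℝ | ∃ p : ℝ, 0 ≤ p ∧ r = p * (Dt (Set.Ici p)).toReal} with hT
  have hTbdd : BddAbove T := by
    refine ⟨vε, fun r hr => ?_⟩
    obtain ⟨p, hp0, rfl⟩ := hr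
    rcases le_or_gt p vε with hple | hpgt
    · rw [hmap, hpre_le p hple]
      have h1 : (D (Set.Ici p)).toReal ≤ 1 := by
        have := prob_le_one (μ := D) (s := Set.Ici p)
        calc (D (Set.Ici p)).toReal ≤ (1 : ENNReal).toReal :=
              ENNReal.toReal_mono (by simp) this
          _ = 1 := by simp
      calc p * (D (Set.Ici p)).toReal ≤ p * 1 :=
            mul_le_mul_of_nonneg_left h1 hp0
        _ = p := mul_one p
        _ ≤ vε := hple
    · rw [hmap, hpre_gt p hpgt]
      simp [hvε0]
  have hT0 : (0 : ℝ) ∈ T := ⟨0, le_refl 0, by simp⟩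
  have hOptTnonneg : 0 ≤ Opt1 Dt := le_csSup hTbdd hT0
  -- Opt1 Dt ≥ ε * vε
  have hIicvε : ENNReal.ofReal (1 - ε) ≤ D (Set.Iic vε) := measure_Iic_qval D hε0
  have hIciε : ENNReal.ofReal ε ≤ D (Set.Ici vε) := by
    have hcompl : D (Set.Ici vε) = 1 - D (Set.Iio vε) := by
      rw [← measure_univ (μ := D), ← Set.compl_Iio,
        measure_compl measurableSet_Iio (measure_ne_top D _)]
    rw [hcompl]
    have h1 : D (Set.Iio vε) ≤ ENNReal.ofReal (1 - ε) := measure_Iio_qval D hnonneg ε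
    calc ENNReal.ofReal ε = 1 - ENNReal.ofReal (1 - ε) := by
          rw [show (1 : ENNReal) = ENNReal.ofReal (1 - ε) + ENNReal.ofReal ε by
            rw [← ENNReal.ofReal_add (by linarith) hε0.le]; norm_num]
          simp
      _ ≤ 1 - D (Set.Iio vε) := tsub_le_tsub_left h1 1
  have hOptT : ε * vε ≤ Opt1 Dt := by
    have hmem : vε * (Dt (Set.Ici vε)).toReal ∈ T := ⟨vε, hvε0, rfl⟩
    have htr : ε ≤ (Dt (Set.Ici vε)).toReal := by
      rw [hmap, hpre_le vε le_rfl]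
      have := ENNReal.toReal_mono (measure_ne_top D _) hIciε
      rwa [ENNReal.toReal_ofReal hε0.le] at this
    calc ε * vε = vε * ε := mul_comm _ _
      _ ≤ vε * (Dt (Set.Ici vε)).toReal := mul_le_mul_of_nonneg_left htr hvε0
      _ ≤ Opt1 Dt := le_csSup hTbdd hmem
  -- main bound: every revenue of D is at most Opt1 Dt / (1 - ε)
  have h1ε : (0 : ℝ) < 1 - ε := by linarith
  have hmain : Opt1 D ≤ Opt1 Dt / (1 - ε) := by
    refine Real.sSup_le ?_ (div_nonneg hOptTnonneg h1ε.le)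
    rintro r ⟨p, hp0, rfl⟩
    rcases le_or_gt p vε with hple | hpgt
    · -- price available in truncated distribution
      have hmem : p * (D (Set.Ici p)).toReal ∈ T := by
        refine ⟨p, hp0, ?_⟩
        rw [hmap, hpre_le p hple]
      have h1 : p * (D (Set.Ici p)).toReal ≤ Opt1 Dt := le_csSup hTbdd hmem
      calc p * (D (Set.Ici p)).toReal ≤ Opt1 Dt := h1
        _ ≤ Opt1 Dt / (1 - ε) := by
            rw [le_div_iff₀ h1ε]
            nlinarith
    · -- high price: use regularity
      have hp' : 0 < p := lt_of_le_of_lt hvε0 hpgt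
      set qbar : ℝ := (D (Set.Ici p)).toReal with hqbar
      have hqbar0 : 0 ≤ qbar := ENNReal.toReal_nonneg
      have hDIci : D (Set.Ici p) = ENNReal.ofReal qbar := by
        rw [hqbar, ENNReal.ofReal_toReal (measure_ne_top D _)]
      have hqbarε : qbar ≤ ε := by
        have hdisj : Disjoint (Set.Iic vε) (Set.Ici p) :=
          Set.Iic_disjoint_Ici.2 (not_le.2 hpgt)
        have hsum : D (Set.Iic vε) + D (Set.Ici p) ≤ 1 := by
          rw [← measure_union hdisj measurableSet_Ici]
          exact (measure_mono (Set.subset_univ _)).trans_eq measure_univ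
        have h2 : ENNReal.ofReal (1 - ε) + ENNReal.ofReal qbar ≤
            ENNReal.ofReal (1 - ε) + ENNReal.ofReal ε := by
          calc ENNReal.ofReal (1 - ε) + ENNReal.ofReal qbar
              ≤ D (Set.Iic vε) + D (Set.Ici p) := by
                rw [← hDIci]; exact add_le_add hIicvε le_rfl
            _ ≤ 1 := hsum
            _ = ENNReal.ofReal (1 - ε) + ENNReal.ofReal ε := by
                rw [← ENNReal.ofReal_add (by linarith) hε0.le]; norm_num
        have h3 : ENNReal.ofReal qbar ≤ ENNReal.ofReal ε :=
          (ENNReal.add_le_add_iff_left (by simp)).1 h2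
        have := ENNReal.toReal_mono (by simp) h3
        rwa [ENNReal.toReal_ofReal hqbar0, ENNReal.toReal_ofReal hε0.le] at this
      -- for every q ∈ (0, qbar) we have (1-ε) * p * q ≤ Opt1 Dt
      have hkey : ∀ q : ℝ, 0 < q → q < qbar → (1 - ε) * (p * q) ≤ Opt1 Dt := by
        intro q hq0 hqlt
        have hqbarpos : 0 < qbar := lt_trans hq0 hqlt
        have hlt : ENNReal.ofReal q < D (Set.Ici p) := by
          rw [hDIci]
          exact (ENNReal.ofReal_lt_ofReal_iff hqbarpos).2 hqlt
        have hpq : p ≤ qval D q := price_le_qval D hq0 (by linarith) hlt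
        have hb := regular_bound D hreg ⟨hε0, hε1⟩ hq0.le (by linarith)
        calc (1 - ε) * (p * q) = (1 - ε) * (q * p) := by ring
          _ ≤ (1 - ε) * (q * qval D q) := by
              apply mul_le_mul_of_nonneg_left _ h1ε.le
              exact mul_le_mul_of_nonneg_left hpq hq0.le
          _ ≤ ε * qval D ε := hb
          _ ≤ Opt1 Dt := hOptT
      -- pass to the limit q → qbar
      have hfinal : (1 - ε) * (p * qbar) ≤ Opt1 Dt := by
        rcases eq_or_lt_of_le hqbar0 with heq | hqbarpos
        · rw [← heq]; simpa using hOptTnonneg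
        · by_contra hcon
          push_neg at hcon
          set c : ℝ := (1 - ε) * p with hc
          have hcpos : 0 < c := mul_pos h1ε hp'
          have hdiv : Opt1 Dt / c < qbar := by
            rw [div_lt_iff₀ hcpos]
            calc Opt1 Dt < (1 - ε) * (p * qbar) := hcon
              _ = qbar * c := by ring
          obtain ⟨q, hq1, hq2⟩ := exists_between (max_lt hdiv hqbarpos)
          have hq0' : 0 < q := lt_of_le_of_lt (le_max_right _ _) hq1
          have := hkey q hq0' hq2
          have hgt : Opt1 Dt < (1 - ε) * (p * q) := by
            have : Opt1 Dt / c < q := lt_of_le_of_lt (le_max_left _ _) hq1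
            rw [div_lt_iff₀ hcpos] at this
            calc Opt1 Dt < q * c := this
              _ = (1 - ε) * (p * q) := by ring
          linarith
      have hring : p * qbar * (1 - ε) = (1 - ε) * (p * qbar) := by ring
      rw [le_div_iff₀ h1ε, hring]
      exact hfinal
  calc (1 - ε) * Opt1 D ≤ (1 - ε) * (Opt1 Dt / (1 - ε)) :=
        mul_le_mul_of_nonneg_left hmain h1ε.le
    _ = Opt1 Dt := by field_simp
end
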